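/- Let p, q ∈ ℂ[t,u] be nonzero polynomials in two variables. The Newton polygon of the product pq equals the Minkowski sum of the Newton polygons of p and q: N_{pq} = N_p + N_q, where N_f is the convex hull in ℝ² of the exponent vectors of monomials appearing in f with nonzero coefficient, and A + B = {a + b : a ∈ A, b ∈ B}. -/

import Mathlib

open MvPolynomial
open scoped Pointwise

/-- The exponent-vector map into `ℝ × ℝ`. -/
noncomputable def NF (d : Fin 2 →₀ ℕ) : ℝ × ℝ := ((d 0 : ℝ), (d 1 : ℝ))

/-- An "irrational slope" functional, injective on integer points. -/
noncomputable def L0 (d : Fin 2 →₀ ℕ) : ℝ := (d 0 : ℝ) + Real.sqrt 2 * (d 1 : ℝ)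

lemma NF_add (d e : Fin 2 →₀ ℕ) : NF (d + e) = NF d + NF e := by
  simp only [NF, Finsupp.add_apply, Nat.cast_add, Prod.mk_add_mk]

lemma L0_add (d e : Fin 2 →₀ ℕ) : L0 (d + e) = L0 d + L0 e := by
  simp only [L0, Finsupp.add_apply, Nat.cast_add]
  ring

lemma L0_inj (d e : Fin 2 →₀ ℕ) (h : L0 d = L0 e) : d = e := by
  unfold L0 at h
  have h1 : d 1 = e 1 := by
    by_contra hne
    apply irrational_sqrt_two
    have hne' : ((e 1 : ℝ)) - (d 1 : ℝ) ≠ 0 := by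
      intro h'
      apply hne
      have h'' := sub_eq_zero.mp h'
      exact_mod_cast h''.symm
    refine ⟨((d 0 : ℚ) - (e 0 : ℚ)) / ((e 1 : ℚ) - (d 1 : ℚ)), ?_⟩
    push_cast
    field_simp
    linarith
  have h0 : d 0 = e 0 := by
    have h1' : (d 1 : ℝ) = (e 1 : ℝ) := by exact_mod_cast h1
    rw [h1'] at h
    have : (d 0 : ℝ) = (e 0 : ℝ) := by linarith
    exact_mod_cast this
  ext i
  fin_cases i
  · exact h0
  · exact h1

/-- Lexicographic max selection: pick an element maximizing `ℓ ∘ NF`, and among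
those, maximizing `L0`. -/
lemma aux_pick (ℓ : ℝ × ℝ →L[ℝ] ℝ) (s : Finset (Fin 2 →₀ ℕ)) (hs : s.Nonempty) :
    ∃ a ∈ s, ∀ x ∈ s, ℓ (NF x) ≤ ℓ (NF a) ∧ (ℓ (NF x) = ℓ (NF a) → L0 x ≤ L0 a) := by
  obtain ⟨m, hm, hmax⟩ := s.exists_max_image (fun d => ℓ (NF d)) hs
  classical
  set S := s.filter (fun d => ℓ (NF d) = ℓ (NF m)) with hS
  have hmS : m ∈ S := Finset.mem_filter.mpr ⟨hm, rfl⟩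
  obtain ⟨a, ha, hamax⟩ := S.exists_max_image L0 ⟨m, hmS⟩
  obtain ⟨haS, haeq⟩ := Finset.mem_filter.mp ha
  refine ⟨a, haS, fun x hx => ⟨?_, ?_⟩⟩
  · rw [haeq]; exact hmax x hx
  · intro hxa
    exact hamax x (Finset.mem_filter.mpr ⟨hx, by rw [hxa, haeq]⟩)

set_option maxHeartbeats 1000000 in
/-- Key lemma: for any functional `ℓ` there are maximizers `a`, `b` of `ℓ ∘ NF`
on the supports of `p`, `q` with `a + b` in the support of `p * q`. -/
lemma aux_key (ℓ : ℝ × ℝ →L[ℝ] ℝ) (p q : MvPolynomial (Fin 2) ℂ) (hp : p ≠ 0) (hq : q ≠ 0) :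
    ∃ c ∈ (p * q).support, ∃ a ∈ p.support, ∃ b ∈ q.support,
      (∀ x ∈ p.support, ℓ (NF x) ≤ ℓ (NF a)) ∧
      (∀ x ∈ q.support, ℓ (NF x) ≤ ℓ (NF b)) ∧
      ℓ (NF c) = ℓ (NF a) + ℓ (NF b) := by
  obtain ⟨a, ha, hA⟩ := aux_pick ℓ p.support (support_nonempty.mpr hp)
  obtain ⟨b, hb, hB⟩ := aux_pick ℓ q.support (support_nonempty.mpr hq)
  refine ⟨a + b, ?_, a, ha, b, hb, fun x hx => (hA x hx).1, fun x hx => (hB x hx).1, by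
    rw [NF_add, map_add]⟩
  have hco : coeff (a + b) (p * q) = coeff a p * coeff b q := by
    rw [coeff_mul]
    refine Finset.sum_eq_single_of_mem (a, b) (Finset.HasAntidiagonal.mem_antidiagonal.mpr rfl) ?_
    rintro ⟨x, y⟩ hxy hne
    by_contra hcoeff
    have hx : x ∈ p.support := mem_support_iff.mpr (left_ne_zero_of_mul hcoeff)
    have hy : y ∈ q.support := mem_support_iff.mpr (right_ne_zero_of_mul hcoeff)
    have hsum : x + y = a + b := Finset.HasAntidiagonal.mem_antidiagonal.mp hxy
    have e1 : ℓ (NF x) + ℓ (NF y) = ℓ (NF a) + ℓ (NF b) := by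
      rw [← map_add, ← map_add, ← NF_add, ← NF_add, hsum]
    have lx := (hA x hx).1
    have ly := (hB y hy).1
    have ex : ℓ (NF x) = ℓ (NF a) := le_antisymm lx (by linarith)
    have ey : ℓ (NF y) = ℓ (NF b) := by linarith
    have l0sum : L0 x + L0 y = L0 a + L0 b := by
      rw [← L0_add, ← L0_add, hsum]
    have l0x := (hA x hx).2 ex
    have l0y := (hB y hy).2 ey
    have hxa : x = a := L0_inj x a (by linarith)
    subst hxa
    exact hne (by rw [add_left_cancel hsum])
  rw [mem_support_iff, hco]
  exact mul_ne_zero (mem_support_iff.mp ha) (mem_support_iff.mp hb)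

set_option maxHeartbeats 1000000 in
theorem stmt_18 (p q : MvPolynomial (Fin 2) ℂ) (hp : p ≠ 0) (hq : q ≠ 0) :
    convexHull ℝ
        (↑((p * q).support.image fun d => ((d 0 : ℝ), (d 1 : ℝ))) : Set (ℝ × ℝ))
      = convexHull ℝ (↑(p.support.image fun d => ((d 0 : ℝ), (d 1 : ℝ))) : Set (ℝ × ℝ))
        + convexHull ℝ (↑(q.support.image fun d => ((d 0 : ℝ), (d 1 : ℝ))) : Set (ℝ × ℝ)) := by
  rw [show (fun d : Fin 2 →₀ ℕ => ((d 0 : ℝ), (d 1 : ℝ))) = NF from rfl]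
  rw [← convexHull_add]
  apply Set.Subset.antisymm
  · apply convexHull_mono
    intro v hv
    simp only [Finset.coe_image, Set.mem_image, Finset.mem_coe] at hv
    obtain ⟨d, hd, rfl⟩ := hv
    obtain ⟨x, hx, y, hy, rfl⟩ := Finset.mem_add.mp (MvPolynomial.support_mul p q hd)
    rw [NF_add]
    exact Set.add_mem_add (Finset.mem_coe.mpr (Finset.mem_image_of_mem _ hx))
      (Finset.mem_coe.mpr (Finset.mem_image_of_mem _ hy))
  · intro v hv
    by_contra hvT
    have hclosed : IsClosed (convexHull ℝ (↑((p * q).support.image NF) : Set (ℝ × ℝ))) :=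
      (Set.Finite.isCompact_convexHull (𝕜 := ℝ) (Finset.finite_toSet _)).isClosed
    obtain ⟨ℓ, u, hlt, hgt⟩ :=
      geometric_hahn_banach_closed_point (convex_convexHull ℝ _) hclosed hvT
    obtain ⟨c, hc, a, ha, b, hb, hmaxp, hmaxq, hceq⟩ := aux_key ℓ p q hp hq
    rw [convexHull_add, Set.mem_add] at hv
    obtain ⟨y, hy, z, hz, rfl⟩ := hv
    have hyle : ℓ y ≤ ℓ (NF a) := by
      have : convexHull ℝ (↑(p.support.image NF) : Set (ℝ × ℝ)) ⊆ {w | ℓ w ≤ ℓ (NF a)} := by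
        apply convexHull_min
        · rintro w hw
          simp only [Finset.coe_image, Set.mem_image, Finset.mem_coe] at hw
          obtain ⟨x, hx, rfl⟩ := hw
          exact hmaxp x hx
        · exact convex_halfSpace_le ℓ.toLinearMap.isLinear _
      exact this hy
    have hzle : ℓ z ≤ ℓ (NF b) := by
      have : convexHull ℝ (↑(q.support.image NF) : Set (ℝ × ℝ)) ⊆ {w | ℓ w ≤ ℓ (NF b)} := by
        apply convexHull_min
        · rintro w hw
          simp only [Finset.coe_image, Set.mem_image, Finset.mem_coe] at hw
          obtain ⟨x, hx, rfl⟩ := hw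
          exact hmaxq x hx
        · exact convex_halfSpace_le ℓ.toLinearMap.isLinear _
      exact this hz
    have hcmem : NF c ∈ convexHull ℝ (↑((p * q).support.image NF) : Set (ℝ × ℝ)) :=
      subset_convexHull ℝ _ (Finset.mem_coe.mpr (Finset.mem_image_of_mem _ hc))
    have h1 := hlt _ hcmem
    have h2 : ℓ (y + z) = ℓ y + ℓ z := map_add ℓ y z
    linarith
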